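/- arXiv:1903.08379 — 2 statements merged into one kernel-verified Lean document; each statement's English description precedes it below -/
import Mathlib

section
/- For all n ≥ 1 and m ≥ 1, the higher order Bell numbers satisfy B_n^(m) = Σ_{s=0}^{n−1} C(n−1, s) · B_s^(m) · B_{n−s}^(m−1), where B_0^(m) = 1 and C(n−1,s) is a binomial coefficient. -/
/-- `m`-th order ("hyper") partitions of a finite set `s`:
a chain `(P₁, …, P_m)` where `P₁` is a partition of `s` and each `P_{j+1}`
is a partition of the set of blocks of `P_j`. For `m = 0` it is `s` itself
(a single trivial object). -/
def HyperPartition : (m : ℕ) → {α : Type} → [DecidableEq α] → Finset α → Type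
  | 0, _, _, _ => PUnit
  | m + 1, _, _, s => (P : Finpartition s) × HyperPartition m P.parts

/-- The number of blocks of the outermost partition of a hyper partition
(for `m = 0`, by convention, the cardinality of the underlying set). -/
def HyperPartition.outerBlocks :
    (m : ℕ) → {α : Type} → [DecidableEq α] → {s : Finset α} →
      HyperPartition m s → ℕ
  | 0, _, _, s, _ => s.card
  | 1, _, _, _, p => p.1.parts.card
  | m + 2, _, _, _, p => HyperPartition.outerBlocks (m + 1) p.2

/-- `|℘ₙ^(m)|`: the number of `m`-th order partitions of an `n`-element set. -/
noncomputable def hyperBell (m n : ℕ) : ℕ :=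
  Nat.card (HyperPartition m (Finset.univ : Finset (Fin n)))

/-- The `m`-th order Stirling number `S^(m)(n,k)`: the number of `m`-th order
partitions of an `n`-element set whose outermost partition has exactly `k` blocks. -/
noncomputable def hyperStirling (m n k : ℕ) : ℕ :=
  Nat.card {p : HyperPartition m (Finset.univ : Finset (Fin n)) //
    HyperPartition.outerBlocks m p = k}

/-- The ordinary Stirling number of the second kind `S(n,k)`: the number of
set partitions of an `n`-element set into exactly `k` blocks. -/
noncomputable def stirling (n k : ℕ) : ℕ :=
  Nat.card {P : Finpartition (Finset.univ : Finset (Fin n)) // P.parts.card = k}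

/-- Composition `f(g(x))` of formal power series (intended for `g` with zero
constant term, in which case `coeff n (g ^ i) = 0` for `i > n`). -/
noncomputable def psComp (f g : PowerSeries ℚ) : PowerSeries ℚ :=
  PowerSeries.mk fun n =>
    PowerSeries.coeff (R := ℚ) n
      (∑ i ∈ Finset.range (n + 1), PowerSeries.C (R := ℚ) (PowerSeries.coeff (R := ℚ) i f) * g ^ i)

/-- The iterated exponential series: `E₀ = exp x`, `E_{m+1} = exp (E_m - 1)`. -/
noncomputable def E : ℕ → PowerSeries ℚ
  | 0 => PowerSeries.exp ℚ
  | m + 1 => psComp (PowerSeries.exp ℚ) (E m - 1)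

/-- The `m`-th order Bell number `Bₙ^(m) = n! · [xⁿ] E_m(x)`. -/
noncomputable def bell (m n : ℕ) : ℚ :=
  (n.factorial : ℚ) * PowerSeries.coeff (R := ℚ) n (E m)


open PowerSeries Finset

lemma coeff_pow_zero {g : PowerSeries ℚ} (hg : constantCoeff (R := ℚ) g = 0) {n i : ℕ} (h : n < i) :
    coeff (R := ℚ) n (g ^ i) = 0 := by
  have hX : (X : PowerSeries ℚ) ∣ g := X_dvd_iff.mpr hg
  exact (X_pow_dvd_iff.mp (pow_dvd_pow_of_dvd hX i)) n h

lemma coeff_psComp_exp (g : PowerSeries ℚ) (n : ℕ) :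
    coeff (R := ℚ) n (psComp (exp ℚ) g) =
      ∑ i ∈ range (n + 1), ((i.factorial : ℚ))⁻¹ * coeff (R := ℚ) n (g ^ i) := by
  simp [psComp, coeff_mk, coeff_C_mul, coeff_exp, one_div]

/-- extended-range version -/
lemma coeff_psComp_exp' {g : PowerSeries ℚ} (hg : constantCoeff (R := ℚ) g = 0) (n N : ℕ) (h : n < N) :
    coeff (R := ℚ) n (psComp (exp ℚ) g) =
      ∑ i ∈ range N, ((i.factorial : ℚ))⁻¹ * coeff (R := ℚ) n (g ^ i) := by
  rw [coeff_psComp_exp]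
  apply Finset.sum_subset
  · exact range_subset_range.mpr h
  · intro i _ hi
    rw [Finset.mem_range, not_lt] at hi
    rw [coeff_pow_zero hg (by omega : n < i), mul_zero]

lemma constCoeff_E (m : ℕ) : constantCoeff (R := ℚ) (E m) = 1 := by
  induction m with
  | zero => simpa [E] using constantCoeff_exp (A := ℚ)
  | succ m ih =>
    have : constantCoeff (R := ℚ) (E m - 1) = 0 := by simp [ih]
    rw [E, ← coeff_zero_eq_constantCoeff_apply, coeff_psComp_exp, Finset.sum_range_one]
    simp

lemma coeff_pow_mul_deriv (g : PowerSeries ℚ) (j n : ℕ) :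
    coeff (R := ℚ) n (g ^ j * d⁄dX ℚ g) =
      ∑ s ∈ range (n + 1), coeff (R := ℚ) s (g ^ j) * (((n - s : ℕ) : ℚ) + 1) * coeff (R := ℚ) (n - s + 1) g := by
  rw [coeff_mul, Finset.Nat.sum_antidiagonal_eq_sum_range_succ_mk]
  refine Finset.sum_congr rfl fun s hs => ?_
  rw [coeff_derivative]; push_cast; ring

lemma key (g : PowerSeries ℚ) (hg : constantCoeff (R := ℚ) g = 0) (n : ℕ) :
    ((n + 1 : ℕ) : ℚ) * coeff (R := ℚ) (n + 1) (psComp (exp ℚ) g) =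
      ∑ s ∈ range (n + 1),
        coeff (R := ℚ) s (psComp (exp ℚ) g) * ((n + 1 - s : ℕ) : ℚ) * coeff (R := ℚ) (n + 1 - s) g := by
  have hL : ((n + 1 : ℕ) : ℚ) * coeff (R := ℚ) (n + 1) (psComp (exp ℚ) g) =
      ∑ j ∈ range (n + 1), ((j.factorial : ℚ))⁻¹ * coeff (R := ℚ) n (g ^ j * d⁄dX ℚ g) := by
    rw [coeff_psComp_exp, Finset.mul_sum, Finset.sum_range_succ']
    have h0 : ((n + 1 : ℕ) : ℚ) * (((Nat.factorial 0 : ℕ) : ℚ)⁻¹ * coeff (R := ℚ) (n + 1) (g ^ 0)) = 0 := by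
      simp [coeff_one]
    rw [h0, add_zero]
    refine Finset.sum_congr rfl fun i _ => ?_
    have hd : coeff (R := ℚ) (n + 1) (g ^ (i + 1)) * ((n : ℚ) + 1 + 1 - 1) =
        ((i : ℚ) + 1) * coeff (R := ℚ) n (g ^ i * d⁄dX ℚ g) := by
      have h2 : coeff (R := ℚ) n (d⁄dX ℚ (g ^ (i + 1))) =
          ((i : ℚ) + 1) * coeff (R := ℚ) n (g ^ i * d⁄dX ℚ g) := by
        rw [Derivation.leibniz_pow]
        simp only [smul_eq_mul, Nat.add_sub_cancel, nsmul_eq_mul]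
        rw [show ((i + 1 : ℕ) : ℚ⟦X⟧) = PowerSeries.C (R := ℚ) ((i + 1 : ℕ) : ℚ) from by
            rw [map_natCast], coeff_C_mul]
        push_cast; ring
      rw [← h2, coeff_derivative]; push_cast; ring
    have hfac : (((i + 1).factorial : ℕ) : ℚ) = ((i : ℚ) + 1) * (i.factorial : ℚ) := by
      push_cast [Nat.factorial_succ]; ring
    have h1 : (i.factorial : ℚ) ≠ 0 := Nat.cast_ne_zero.mpr i.factorial_ne_zero
    have h3 : ((i : ℚ) + 1) ≠ 0 := by positivity
    rw [hfac]
    field_simp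
    linear_combination (norm := (push_cast; ring)) hd
  rw [hL]
  -- now RHS
  have hR : ∀ s ∈ range (n + 1),
      coeff (R := ℚ) s (psComp (exp ℚ) g) * ((n + 1 - s : ℕ) : ℚ) * coeff (R := ℚ) (n + 1 - s) g =
      ∑ j ∈ range (n + 1), ((j.factorial : ℚ))⁻¹ *
        (coeff (R := ℚ) s (g ^ j) * (((n - s : ℕ) : ℚ) + 1) * coeff (R := ℚ) (n - s + 1) g) := by
    intro s hs
    rw [Finset.mem_range] at hs
    have h1 : n + 1 - s = n - s + 1 := by omega
    rw [h1, coeff_psComp_exp' hg s (n + 1) (by omega), Finset.sum_mul, Finset.sum_mul]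
    refine Finset.sum_congr rfl fun j _ => ?_
    push_cast; ring
  rw [Finset.sum_congr rfl hR, Finset.sum_comm]
  refine Finset.sum_congr rfl fun j _ => ?_
  rw [coeff_pow_mul_deriv, Finset.mul_sum]


/-- `Bₙ^(m) = Σ_{s=0}^{n−1} C(n−1,s) · B_s^(m) · B_{n−s}^(m−1)`
(and `B₀^(m) = 1` holds by definition of `bell`). -/
theorem stmt4 (n m : ℕ) (hn : 1 ≤ n) (hm : 1 ≤ m) :
    bell m n =
      ∑ s ∈ Finset.range n, ((n - 1).choose s : ℚ) * bell m s * bell (m - 1) (n - s) := by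
  obtain ⟨t, rfl⟩ : ∃ t, n = t + 1 := ⟨n - 1, by omega⟩
  obtain ⟨k, rfl⟩ : ∃ k, m = k + 1 := ⟨m - 1, by omega⟩
  simp only [Nat.add_sub_cancel]
  have hg : constantCoeff (R := ℚ) (E k - 1) = 0 := by simp [constCoeff_E]
  have hkey := key (E k - 1) hg t
  have hE : E (k + 1) = psComp (exp ℚ) (E k - 1) := rfl
  unfold bell
  rw [hE]
  calc (((t + 1).factorial : ℕ) : ℚ) * coeff (R := ℚ) (t + 1) (psComp (exp ℚ) (E k - 1))
      = (t.factorial : ℚ) * (((t + 1 : ℕ) : ℚ) *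
          coeff (R := ℚ) (t + 1) (psComp (exp ℚ) (E k - 1))) := by
        push_cast [Nat.factorial_succ]; ring
    _ = (t.factorial : ℚ) * ∑ s ∈ range (t + 1),
          coeff (R := ℚ) s (psComp (exp ℚ) (E k - 1)) * ((t + 1 - s : ℕ) : ℚ) *
            coeff (R := ℚ) (t + 1 - s) (E k - 1) := by rw [hkey]
    _ = _ := by
        rw [Finset.mul_sum]
        refine Finset.sum_congr rfl fun s hs => ?_
        rw [Finset.mem_range] at hs
        have hcoe : coeff (R := ℚ) (t + 1 - s) (E k - 1) = coeff (R := ℚ) (t + 1 - s) (E k) := by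
          rw [map_sub, coeff_one, if_neg (by omega), sub_zero]
        have hnatl : t.choose s * s.factorial * (t + 1 - s).factorial =
            t.factorial * (t + 1 - s) := by
          have h1 : t + 1 - s = (t - s) + 1 := by omega
          rw [h1, Nat.factorial_succ, show t.choose s * s.factorial * ((t - s + 1) *
            (t - s).factorial) = t.choose s * s.factorial * (t - s).factorial * (t - s + 1)
            from by ring, Nat.choose_mul_factorial_mul_factorial (by omega : s ≤ t)]
        have hnat : (t.choose s : ℚ) * (s.factorial : ℚ) * ((t + 1 - s).factorial : ℚ) =
            (t.factorial : ℚ) * ((t + 1 - s : ℕ) : ℚ) := by exact_mod_cast hnatl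
        rw [hcoe]
        linear_combination -(coeff (R := ℚ) s (psComp (exp ℚ) (E k - 1))) *
          (coeff (R := ℚ) (t + 1 - s) (E k)) * hnat
end

section
/- Fix N ≥ 1 and let 𝐒 be the N×N matrix whose (i,j) entry is the ordinary Stirling number of the second kind S(i,j) for 1 ≤ i, j ≤ N. Then for all m ≥ 1 and all 1 ≤ k ≤ n ≤ N, the (n,k) entry of the matrix power 𝐒^m equals the m-th order Stirling number S^(m)(n,k). -/
section Fimg

variable {α β : Type} [DecidableEq α] [DecidableEq β]

/-- Image of a finset `b ⊆ s` under a bijection between the coercions of `s` and `t`. -/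
def fimg {s : Finset α} {t : Finset β} (e : {x // x ∈ s} ≃ {y // y ∈ t}) (b : Finset α) :
    Finset β :=
  (s.attach.filter (fun x => x.1 ∈ b)).image (fun x => (e x).1)

lemma mem_fimg {s : Finset α} {t : Finset β} (e : {x // x ∈ s} ≃ {y // y ∈ t})
    {b : Finset α} {y : β} :
    y ∈ fimg e b ↔ ∃ x : {x // x ∈ s}, x.1 ∈ b ∧ (e x).1 = y := by
  simp [fimg]

lemma fimg_subset {s : Finset α} {t : Finset β} (e : {x // x ∈ s} ≃ {y // y ∈ t})
    (b : Finset α) : fimg e b ⊆ t := by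
  intro y hy
  obtain ⟨x, -, rfl⟩ := mem_fimg e |>.1 hy
  exact (e x).2

lemma mem_fimg_of_mem {s : Finset α} {t : Finset β} (e : {x // x ∈ s} ≃ {y // y ∈ t})
    {b : Finset α} (x : {x // x ∈ s}) (hx : x.1 ∈ b) : (e x).1 ∈ fimg e b :=
  (mem_fimg e).2 ⟨x, hx, rfl⟩

lemma fimg_fimg {s : Finset α} {t : Finset β} (e : {x // x ∈ s} ≃ {y // y ∈ t})
    {b : Finset α} (hb : b ⊆ s) : fimg e.symm (fimg e b) = b := by
  ext a
  constructor
  · intro ha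
    obtain ⟨y, hy1, rfl⟩ := (mem_fimg e.symm).1 ha
    obtain ⟨x, hx, hex⟩ := (mem_fimg e).1 hy1
    have : y = e x := Subtype.ext hex.symm
    rw [this, Equiv.symm_apply_apply]
    exact hx
  · intro ha
    have := mem_fimg_of_mem e.symm (e ⟨a, hb ha⟩) (by simpa using mem_fimg_of_mem e ⟨a, hb ha⟩ ha)
    simpa using this

lemma fimg_nonempty {s : Finset α} {t : Finset β} (e : {x // x ∈ s} ≃ {y // y ∈ t})
    {b : Finset α} (hb : b ⊆ s) (h : b.Nonempty) : (fimg e b).Nonempty := by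
  obtain ⟨a, ha⟩ := h
  exact ⟨_, mem_fimg_of_mem e ⟨a, hb ha⟩ ha⟩

end Fimg

section FpMap

variable {α β : Type} [DecidableEq α] [DecidableEq β] {s : Finset α} {t : Finset β}

lemma fimg_disjoint (e : {x // x ∈ s} ≃ {y // y ∈ t}) {b c : Finset α}
    (h : Disjoint b c) : Disjoint (fimg e b) (fimg e c) := by
  rw [Finset.disjoint_left] at h ⊢
  intro y hyb hyc
  obtain ⟨x, hx, rfl⟩ := (mem_fimg e).1 hyb
  obtain ⟨x', hx', hex⟩ := (mem_fimg e).1 hyc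
  have : x' = x := e.injective (Subtype.ext hex)
  exact h hx (this ▸ hx')

lemma fimg_injOn (e : {x // x ∈ s} ≃ {y // y ∈ t}) {b c : Finset α}
    (hb : b ⊆ s) (hc : c ⊆ s) (h : fimg e b = fimg e c) : b = c := by
  have := congrArg (fimg e.symm) h
  rwa [fimg_fimg e hb, fimg_fimg e hc] at this

/-- Transport of a `Finpartition` along a bijection of ambient finsets. -/
def fpMap (e : {x // x ∈ s} ≃ {y // y ∈ t}) (P : Finpartition s) : Finpartition t where
  parts := P.parts.image (fimg e)
  supIndep := by
    rw [Finset.supIndep_iff_pairwiseDisjoint]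
    rintro u hu v hv huv
    simp only [Finset.coe_image, Set.mem_image, Finset.mem_coe] at hu hv
    obtain ⟨b, hb, rfl⟩ := hu
    obtain ⟨c, hc, rfl⟩ := hv
    have hbc : b ≠ c := fun h => huv (h ▸ rfl)
    exact fimg_disjoint e (P.disjoint hb hc hbc)
  sup_parts := by
    apply Finset.Subset.antisymm
    · rw [show ((Finset.image (fimg e) P.parts).sup id ⊆ t) ↔
          ((Finset.image (fimg e) P.parts).sup id ≤ t) from Iff.rfl, Finset.sup_le_iff]
      intro u hu
      obtain ⟨b, hb, rfl⟩ := Finset.mem_image.1 hu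
      exact fimg_subset e b
    · intro y hy
      have hy' : (e.symm ⟨y, hy⟩).1 ∈ s := (e.symm ⟨y, hy⟩).2
      have hy2 : (e.symm ⟨y, hy⟩).1 ∈ P.parts.sup id := by rw [P.sup_parts]; exact hy'
      rw [Finset.mem_sup] at hy2
      obtain ⟨b, hb, hyb⟩ := hy2
      rw [Finset.mem_sup]
      refine ⟨fimg e b, Finset.mem_image_of_mem _ hb, ?_⟩
      have := mem_fimg_of_mem e (e.symm ⟨y, hy⟩) hyb
      simpa using this
  bot_notMem := by
    intro h
    obtain ⟨b, hb, hbe⟩ := Finset.mem_image.1 h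
    have hne : b.Nonempty := P.nonempty_of_mem_parts hb
    have := fimg_nonempty e (P.le hb) hne
    rw [hbe] at this
    exact Finset.not_nonempty_empty this

lemma fpMap_parts (e : {x // x ∈ s} ≃ {y // y ∈ t}) (P : Finpartition s) :
    (fpMap e P).parts = P.parts.image (fimg e) := rfl

lemma fpMap_symm_apply (e : {x // x ∈ s} ≃ {y // y ∈ t}) (P : Finpartition s) :
    fpMap e.symm (fpMap e P) = P := by
  apply Finpartition.ext
  rw [fpMap_parts, fpMap_parts, Finset.image_image]
  refine Finset.image_congr (fun b hb => fimg_fimg e (P.le hb)) |>.trans (Finset.image_id)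

lemma fpMap_parts_card (e : {x // x ∈ s} ≃ {y // y ∈ t}) (P : Finpartition s) :
    (fpMap e P).parts.card = P.parts.card := by
  rw [fpMap_parts]
  exact Finset.card_image_of_injOn (fun b hb c hc h => fimg_injOn e (P.le hb) (P.le hc) h)

/-- Transport of Finpartitions as an equivalence. -/
def fpEquiv (e : {x // x ∈ s} ≃ {y // y ∈ t}) : Finpartition s ≃ Finpartition t where
  toFun := fpMap e
  invFun := fpMap e.symm
  left_inv := fpMap_symm_apply e
  right_inv := fun Q => by simpa using fpMap_symm_apply e.symm Q

/-- The induced bijection on the sets of parts. -/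
def partsEquiv (e : {x // x ∈ s} ≃ {y // y ∈ t}) (P : Finpartition s) :
    {b // b ∈ P.parts} ≃ {c // c ∈ (fpMap e P).parts} where
  toFun b := ⟨fimg e b.1, by rw [fpMap_parts]; exact Finset.mem_image_of_mem _ b.2⟩
  invFun c := ⟨fimg e.symm c.1, by
    obtain ⟨b, hb, hbe⟩ := Finset.mem_image.1 (by rw [← fpMap_parts e P]; exact c.2)
    rw [← hbe, fimg_fimg e (P.le hb)]
    exact hb⟩
  left_inv b := Subtype.ext (fimg_fimg e (P.le b.2))
  right_inv c := by
    obtain ⟨b, hb, hbe⟩ := Finset.mem_image.1 (by rw [← fpMap_parts e P]; exact c.2)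
    refine Subtype.ext ?_
    simp only
    rw [← hbe, fimg_fimg e (P.le hb)]

end FpMap

/-- Transport of hyper partitions along a bijection of ambient finsets. -/
def hpEquiv : (m : ℕ) → {α β : Type} → [DecidableEq α] → [DecidableEq β] →
    {s : Finset α} → {t : Finset β} → ({x // x ∈ s} ≃ {y // y ∈ t}) →
    (HyperPartition m s ≃ HyperPartition m t)
  | 0, _, _, _, _, _, _, _ => Equiv.refl PUnit
  | m + 1, _, _, _, _, _, _, e =>
    Equiv.sigmaCongr (fpEquiv e) (fun P => hpEquiv m (partsEquiv e P))

lemma outer_hpEquiv : ∀ (m : ℕ) {α β : Type} [DecidableEq α] [DecidableEq β]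
    {s : Finset α} {t : Finset β} (e : {x // x ∈ s} ≃ {y // y ∈ t})
    (p : HyperPartition m s),
    HyperPartition.outerBlocks m (hpEquiv m e p) = HyperPartition.outerBlocks m p
  | 0, α, β, _, _, s, t, e, p => by
    show t.card = s.card
    rw [← Fintype.card_coe, ← Fintype.card_coe]
    exact (Fintype.card_congr e).symm
  | 1, α, β, _, _, s, t, e, p => by
    obtain ⟨P, u⟩ := p
    show (fpMap e P).parts.card = P.parts.card
    exact fpMap_parts_card e P
  | (m + 2), α, β, _, _, s, t, e, p => by
    obtain ⟨P, q⟩ := p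
    show HyperPartition.outerBlocks (m + 1) (hpEquiv (m + 1) (partsEquiv e P) q)
      = HyperPartition.outerBlocks (m + 1) q
    exact outer_hpEquiv (m + 1) (partsEquiv e P) q

lemma hpFinite : ∀ (m : ℕ) {α : Type} [DecidableEq α] (s : Finset α),
    Finite (HyperPartition m s)
  | 0, _, _, _ => inferInstanceAs (Finite PUnit.{1})
  | m + 1, α, _, s => by
    haveI : ∀ P : Finpartition s, Finite (HyperPartition m P.parts) :=
      fun P => hpFinite m P.parts
    exact inferInstanceAs (Finite ((P : Finpartition s) × HyperPartition m P.parts))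

instance {m : ℕ} {α : Type} [DecidableEq α] {s : Finset α} : Finite (HyperPartition m s) :=
  hpFinite m s

/-- Counting hyper partitions only depends on the cardinality of the ambient set. -/
lemma card_hp_eq (m : ℕ) {α : Type} [DecidableEq α] (s : Finset α) (k : ℕ) :
    Nat.card {p : HyperPartition m s // HyperPartition.outerBlocks m p = k}
      = hyperStirling m s.card k := by
  have e : {x // x ∈ s} ≃ {y // y ∈ (Finset.univ : Finset (Fin s.card))} :=
    s.equivFin.trans (Equiv.subtypeUnivEquiv (fun x => Finset.mem_univ x)).symm
  exact Nat.card_congr ((hpEquiv m e).subtypeEquiv (fun p => by rw [outer_hpEquiv]))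

lemma hyperStirling_one (n k : ℕ) : hyperStirling 1 n k = stirling n k := by
  refine Nat.card_congr ?_
  exact
    { toFun := fun p => ⟨p.1.1, p.2⟩
      invFun := fun P => ⟨⟨P.1, PUnit.unit⟩, P.2⟩
      left_inv := fun ⟨⟨P, u⟩, h⟩ => rfl
      right_inv := fun ⟨P, h⟩ => rfl }

lemma stirling_eq_zero_of_lt {n k : ℕ} (h : n < k) : stirling n k = 0 := by
  rw [stirling, Nat.card_eq_zero]
  left
  refine ⟨fun ⟨P, hP⟩ => ?_⟩
  have := P.card_parts_le_card
  simp only [Finset.card_univ, Fintype.card_fin] at this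
  omega

lemma stirling_zero_right (n : ℕ) (hn : 0 < n) : stirling n 0 = 0 := by
  rw [stirling, Nat.card_eq_zero]
  left
  refine ⟨fun ⟨P, hP⟩ => ?_⟩
  have hne : P.parts.Nonempty := by
    apply P.parts_nonempty
    intro h
    have : (Finset.univ : Finset (Fin n)).card = 0 := by rw [h]; rfl
    simp only [Finset.card_univ, Fintype.card_fin] at this
    omega
  rw [← Finset.card_pos, hP] at hne
  omega

/-- A sigma-subtype commutation equivalence. -/
def sigmaSubtypeEquiv {ι : Type*} {f : ι → Type*} (p : ∀ i, f i → Prop) :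
    {x : Σ i, f i // p x.1 x.2} ≃ Σ i, {y : f i // p i y} where
  toFun x := ⟨x.1.1, x.1.2, x.2⟩
  invFun x := ⟨⟨x.1, x.2.1⟩, x.2.2⟩
  left_inv := fun ⟨⟨i, y⟩, h⟩ => rfl
  right_inv := fun ⟨i, y, h⟩ => rfl

/-- The recurrence: an `(m+1)`-th order partition is an ordinary partition together with
an `m`-th order partition of its set of blocks (`m ≥ 1`). -/
lemma hyperStirling_rec (m : ℕ) (hm : 1 ≤ m) (n k : ℕ) :
    hyperStirling (m + 1) n k
      = ∑ j ∈ Finset.range (n + 1), stirling n j * hyperStirling m j k := by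
  obtain ⟨m', rfl⟩ : ∃ m'', m = m'' + 1 := ⟨m - 1, by omega⟩
  have e1 : {p : HyperPartition (m' + 1 + 1) (Finset.univ : Finset (Fin n)) //
      HyperPartition.outerBlocks (m' + 1 + 1) p = k}
      ≃ Σ P : Finpartition (Finset.univ : Finset (Fin n)),
        {q : HyperPartition (m' + 1) P.parts //
          HyperPartition.outerBlocks (m' + 1) q = k} :=
    sigmaSubtypeEquiv (fun P q => HyperPartition.outerBlocks (m' + 1) q = k)
  rw [hyperStirling, Nat.card_congr e1]
  haveI : ∀ P : Finpartition (Finset.univ : Finset (Fin n)),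
      Fintype {q : HyperPartition (m' + 1) P.parts //
        HyperPartition.outerBlocks (m' + 1) q = k} :=
    fun P => Fintype.ofFinite _
  rw [Nat.card_eq_fintype_card, Fintype.card_sigma]
  have step : ∀ P : Finpartition (Finset.univ : Finset (Fin n)),
      Fintype.card {q : HyperPartition (m' + 1) P.parts //
          HyperPartition.outerBlocks (m' + 1) q = k}
        = hyperStirling (m' + 1) P.parts.card k := by
    intro P
    rw [← Nat.card_eq_fintype_card]
    exact card_hp_eq (m' + 1) P.parts k
  simp only [step]
  rw [← Finset.sum_fiberwise_of_maps_to (g := fun P => P.parts.card)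
    (t := Finset.range (n + 1)) (fun P _ => Finset.mem_range.2 (by
      show P.parts.card < n + 1
      have := P.card_parts_le_card
      simp only [Finset.card_univ, Fintype.card_fin] at this
      omega))]
  refine Finset.sum_congr rfl (fun j hj => ?_)
  rw [Finset.sum_congr rfl (fun P hP => by
    rw [(Finset.mem_filter.1 hP).2]), Finset.sum_const, smul_eq_mul]
  congr 1
  rw [stirling, Nat.card_eq_fintype_card, Fintype.card_subtype]

/-- the `(n,k)` entry of the `m`-th power of the `N × N` Stirling matrix
`𝐒 = (S(i,j))_{1 ≤ i,j ≤ N}` is the `m`-th order Stirling number `S^(m)(n,k)`,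
for `1 ≤ k ≤ n ≤ N` (indices shifted by one since `Fin N` is zero-based). -/
theorem stmt7 (N : ℕ) (hN : 1 ≤ N) (S : Matrix (Fin N) (Fin N) ℕ)
    (hS : ∀ i j : Fin N, S i j = stirling ((i : ℕ) + 1) ((j : ℕ) + 1))
    (m : ℕ) (hm : 1 ≤ m) (n k : Fin N) (hkn : k ≤ n) :
    (S ^ m) n k = hyperStirling m ((n : ℕ) + 1) ((k : ℕ) + 1) := by
  clear hkn
  induction m, hm using Nat.le_induction generalizing n k with
  | base => rw [pow_one, hS, hyperStirling_one]
  | succ m hm ih =>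
    rw [pow_succ' S m, Matrix.mul_apply, hyperStirling_rec m hm ((n : ℕ) + 1) ((k : ℕ) + 1)]
    simp only [hS, ih]
    rw [Finset.sum_range_succ']
    rw [stirling_zero_right _ (by omega), zero_mul, add_zero]
    rw [Fin.sum_univ_eq_sum_range
      (fun j => stirling ((n : ℕ) + 1) (j + 1) * hyperStirling m (j + 1) ((k : ℕ) + 1)) N]
    symm
    apply Finset.sum_subset
    · intro x hx
      rw [Finset.mem_range] at *
      have := n.isLt
      omega
    · intro x hx hnx
      rw [stirling_eq_zero_of_lt (by rw [Finset.mem_range] at *; omega), zero_mul]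
end
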